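/- A measurable set Ω ⊂ ℝ^d multi-tiles ℝ^d at level ℓ by ℤ^d translations (i.e., Σ_{k∈ℤ^d} χ_Ω(ω−k) = ℓ for a.e. ω) if and only if, up to a set of measure zero, Ω is a disjoint union Ω = Ω_1 ∪ ⋯ ∪ Ω_ℓ where each Ω_j is measurable and tiles ℝ^d by ℤ^d translations at level 1. -/

import Mathlib

open MeasureTheory

/-- `Ω` tiles `ℝ^d` by `ℤ^d`-translations at level `ℓ`:
`∑_{k ∈ ℤ^d} χ_Ω(ω - k) = ℓ` for a.e. `ω`. -/
def MultiTiles (d : ℕ) (Ω : Set (Fin d → ℝ)) (ℓ : ℕ) : Prop :=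
  ∀ᵐ ω ∂(volume : Measure (Fin d → ℝ)),
    (∑' k : Fin d → ℤ, Ω.indicator (fun _ => (1 : ℝ)) (ω - fun i => (k i : ℝ))) = ℓ

namespace Stmt1Aux

open scoped ENNReal Classical

variable {d : ℕ}

/-- The real vector corresponding to an integer vector. -/
def cvec (k : Fin d → ℤ) : Fin d → ℝ := fun i => (k i : ℝ)

lemma cvec_add (k m : Fin d → ℤ) : cvec (k + m) = cvec k + cvec m := by
  funext i; simp [cvec]

@[simp] lemma cvec_zero : cvec (0 : Fin d → ℤ) = 0 := by funext i; simp [cvec]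

/-- The set of lattice points `k` with `ω - k ∈ Ω`. -/
def Kset (Ω : Set (Fin d → ℝ)) (ω : Fin d → ℝ) : Set (Fin d → ℤ) :=
  {k | ω - cvec k ∈ Ω}

lemma indicator_comm {M : Type*} [One M] [Zero M] (Ω : Set (Fin d → ℝ)) (ω : Fin d → ℝ)
    (k : Fin d → ℤ) :
    Ω.indicator (fun _ => (1 : M)) (ω - cvec k) = (Kset Ω ω).indicator (fun _ => (1 : M)) k := by
  by_cases h : ω - cvec k ∈ Ω
  · rw [Set.indicator_of_mem h, Set.indicator_of_mem (show k ∈ Kset Ω ω from h)]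
  · rw [Set.indicator_of_notMem h, Set.indicator_of_notMem (show k ∉ Kset Ω ω from h)]

lemma tsum_indicator_encard (S : Set (Fin d → ℤ)) :
    ∑' k, S.indicator (fun _ => (1 : ℝ≥0∞)) k = S.encard := by
  rw [← tsum_subtype]
  exact ENNReal.tsum_set_one S

lemma real_tsum_indicator_eq_iff {S : Set (Fin d → ℤ)} {n : ℕ} (hn : 0 < n) :
    (∑' k, S.indicator (fun _ => (1 : ℝ)) k) = n ↔ S.encard = n := by
  rcases S.finite_or_infinite with hS | hS
  · rw [tsum_eq_sum (s := hS.toFinset)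
      (fun k hk => Set.indicator_of_notMem (fun h => hk (hS.mem_toFinset.2 h)) _)]
    have h1 : ∑ k ∈ hS.toFinset, S.indicator (fun _ => (1 : ℝ)) k = hS.toFinset.card := by
      rw [Finset.sum_congr rfl (fun k hk => Set.indicator_of_mem (hS.mem_toFinset.1 hk) _)]
      simp
    rw [h1, hS.encard_eq_coe_toFinset_card]
    exact ⟨fun h => by exact_mod_cast h, fun h => by exact_mod_cast h⟩
  · have h2 : ¬ Summable (S.indicator (fun _ => (1 : ℝ))) := by
      intro hsum
      have h3 := hsum.tendsto_cofinite_zero (Metric.ball_mem_nhds (0 : ℝ) one_pos)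
      rw [Filter.mem_map, Filter.mem_cofinite] at h3
      refine hS (h3.subset fun k hk => ?_)
      simp [Set.indicator_of_mem hk]
    rw [tsum_eq_zero_of_not_summable h2, hS.encard_eq]
    constructor
    · intro h; exact absurd h.symm (by exact_mod_cast hn.ne')
    · intro h; exact absurd h.symm (by simp)

lemma multiTiles_iff_encard {Ω : Set (Fin d → ℝ)} {n : ℕ} (hn : 0 < n) :
    MultiTiles d Ω n ↔
      ∀ᵐ ω ∂(volume : Measure (Fin d → ℝ)), (Kset Ω ω).encard = n := by
  unfold MultiTiles
  refine Filter.eventually_congr (Filter.Eventually.of_forall fun ω => ?_)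
  rw [tsum_congr (fun k => show Ω.indicator (fun _ => (1:ℝ)) (ω - fun i => (k i : ℝ))
      = (Kset Ω ω).indicator (fun _ => (1:ℝ)) k from indicator_comm Ω ω k)]
  exact real_tsum_indicator_eq_iff hn

/-- Counting function, in `ℝ≥0∞`. -/
noncomputable def KcntE (Ω : Set (Fin d → ℝ)) (ω : Fin d → ℝ) : ℝ≥0∞ :=
  ∑' k : Fin d → ℤ, Ω.indicator (fun _ => (1 : ℝ≥0∞)) (ω - cvec k)

lemma KcntE_eq (Ω : Set (Fin d → ℝ)) (ω : Fin d → ℝ) :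
    KcntE Ω ω = (Kset Ω ω).encard := by
  rw [KcntE, tsum_congr (fun k => indicator_comm Ω ω k), tsum_indicator_encard]

lemma measurable_sub_cvec (k : Fin d → ℤ) : Measurable (fun ω : Fin d → ℝ => ω - cvec k) :=
  measurable_id.sub measurable_const

lemma measurable_KcntE {Ω : Set (Fin d → ℝ)} (hΩ : MeasurableSet Ω) :
    Measurable (KcntE Ω) :=
  Measurable.ennreal_tsum fun k =>
    (measurable_const.indicator hΩ).comp (measurable_sub_cvec k)

/-- The rank function: number of lattice points `m` lexicographically below `0`
with `x - m ∈ Ω`. -/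
noncomputable def rkE (Ω : Set (Fin d → ℝ)) (x : Fin d → ℝ) : ℝ≥0∞ :=
  ∑' m : Fin d → ℤ, if toLex m < toLex (0 : Fin d → ℤ) then
    Ω.indicator (fun _ => (1 : ℝ≥0∞)) (x - cvec m) else 0

def Rset (Ω : Set (Fin d → ℝ)) (x : Fin d → ℝ) : Set (Fin d → ℤ) :=
  {m | toLex m < toLex (0 : Fin d → ℤ) ∧ x - cvec m ∈ Ω}

lemma rkE_eq (Ω : Set (Fin d → ℝ)) (x : Fin d → ℝ) :
    rkE Ω x = (Rset Ω x).encard := by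
  rw [rkE, ← tsum_indicator_encard]
  refine tsum_congr fun m => ?_
  by_cases h1 : toLex m < toLex (0 : Fin d → ℤ) <;>
    by_cases h2 : x - cvec m ∈ Ω <;>
      simp [h1, h2, Set.indicator_apply, Rset]

lemma measurable_rkE {Ω : Set (Fin d → ℝ)} (hΩ : MeasurableSet Ω) :
    Measurable (rkE Ω) := by
  refine Measurable.ennreal_tsum fun m => ?_
  by_cases h : toLex m < toLex (0 : Fin d → ℤ)
  · simp only [if_pos h]
    exact (measurable_const.indicator hΩ).comp (measurable_sub_cvec m)
  · simp only [if_neg h]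
    exact measurable_const

lemma lex_add_lt_add_iff (t a b : Fin d → ℤ) :
    toLex (t + a) < toLex (t + b) ↔ toLex a < toLex b := by
  constructor
  · rintro ⟨i, hj, hi⟩
    refine ⟨i, fun j hlt => ?_, ?_⟩
    · have := hj j hlt
      simpa using add_left_cancel (show t j + a j = t j + b j by simpa using this)
    · exact lt_of_add_lt_add_left (show t i + a i < t i + b i by simpa using hi)
  · rintro ⟨i, hj, hi⟩
    refine ⟨i, fun j hlt => ?_, ?_⟩
    · have := hj j hlt
      show t j + a j = t j + b j
      simpa using this
    · show t i + a i < t i + b i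
      exact (add_lt_add_iff_left _).2 (by simpa using hi)

lemma Kset_shift (Ω : Set (Fin d → ℝ)) (ω : Fin d → ℝ) (k : Fin d → ℤ) :
    Kset Ω (ω - cvec k) = (fun m => k + m) ⁻¹' Kset Ω ω := by
  ext m
  simp [Kset, cvec_add, sub_sub]

lemma encard_preimage_addLeft (k : Fin d → ℤ) (S : Set (Fin d → ℤ)) :
    ((fun m => k + m) ⁻¹' S).encard = S.encard := by
  rw [show (fun m => k + m) = ⇑(Equiv.addLeft k) from rfl,
    ← Equiv.image_symm_eq_preimage, Function.Injective.encard_image (Equiv.injective _)]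

lemma Kset_shift_encard (Ω : Set (Fin d → ℝ)) (ω : Fin d → ℝ) (k : Fin d → ℤ) :
    (Kset Ω (ω - cvec k)).encard = (Kset Ω ω).encard := by
  rw [Kset_shift, encard_preimage_addLeft]

lemma Rset_shift (Ω : Set (Fin d → ℝ)) (ω : Fin d → ℝ) (k : Fin d → ℤ) :
    Rset Ω (ω - cvec k)
      = (fun m => k + m) ⁻¹' (Kset Ω ω ∩ {n | toLex n < toLex k}) := by
  ext m
  simp only [Rset, Kset, Set.mem_setOf_eq, Set.mem_preimage, Set.mem_inter_iff,
    sub_sub, ← cvec_add]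
  rw [show toLex (k + m) < toLex k ↔ toLex m < toLex 0 by
    nth_rewrite 2 [show k = k + 0 from (add_zero k).symm]
    exact lex_add_lt_add_iff k m 0]
  exact and_comm

lemma rkE_shift (Ω : Set (Fin d → ℝ)) (ω : Fin d → ℝ) (k : Fin d → ℤ) :
    rkE Ω (ω - cvec k) = (Kset Ω ω ∩ {n | toLex n < toLex k}).encard := by
  rw [rkE_eq, Rset_shift, encard_preimage_addLeft]

/-! ### Abstract rank lemmas -/

lemma rank_lt_card {α : Type*} (lt : α → α → Prop) (hirr : ∀ a, ¬ lt a a)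
    {S : Set α} (hS : S.Finite) {n : ℕ} (hcard : S.encard = n) {a : α} (ha : a ∈ S) :
    (S ∩ {m | lt m a}).encard < n := by
  have h1 : S ∩ {m | lt m a} ⊂ S :=
    ⟨Set.inter_subset_left, fun h => hirr a (h ha).2⟩
  have := (hS.subset Set.inter_subset_left).encard_lt_encard h1
  rwa [hcard] at this

lemma exists_unique_rank {α : Type*} (lt : α → α → Prop)
    (htrans : Transitive lt) (hirr : ∀ a, ¬ lt a a)
    (htri : ∀ a b, lt a b ∨ a = b ∨ lt b a)
    {S : Set α} (hS : S.Finite) {n : ℕ} (hcard : S.encard = n) {j : ℕ} (hj : j < n) :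
    ∃! a, a ∈ S ∧ (S ∩ {m | lt m a}).encard = j := by
  classical
  set s := hS.toFinset with hs
  have hsc : s.card = n := by
    have := hS.encard_eq_coe_toFinset_card
    rw [hcard] at this
    exact_mod_cast this.symm
  have key : ∀ a : α, S ∩ {m | lt m a} = ↑(s.filter (fun m => lt m a)) := by
    intro a; ext x
    simp [hs, Set.Finite.mem_toFinset, and_comm]
  have henc : ∀ a : α, (S ∩ {m | lt m a}).encard = ((s.filter (fun m => lt m a)).card : ℕ∞) := by
    intro a; rw [key, Set.encard_coe_eq_coe_finsetCard]
  set f : α → ℕ := fun a => (s.filter (fun m => lt m a)).card with hf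
  have hmono : ∀ a ∈ s, ∀ b, lt a b → f a < f b := by
    intro a ha b hab
    apply Finset.card_lt_card
    constructor
    · intro x hx
      simp only [Finset.mem_filter] at hx ⊢
      exact ⟨hx.1, htrans hx.2 hab⟩
    · intro hsub
      exact hirr a (Finset.mem_filter.1 (hsub (Finset.mem_filter.2 ⟨ha, hab⟩))).2
  have hinj : ∀ a ∈ s, ∀ b ∈ s, f a = f b → a = b := by
    intro a ha b hb hfab
    rcases htri a b with h | h | h
    · exact absurd hfab (hmono a ha b h).ne
    · exact h
    · exact absurd hfab.symm (hmono b hb a h).ne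
  have hlt : ∀ a ∈ s, f a < n := by
    intro a ha
    have := rank_lt_card lt hirr hS hcard (hS.mem_toFinset.1 ha)
    rw [henc] at this
    exact_mod_cast this
  have himg : s.image f = Finset.range n := by
    apply Finset.eq_of_subset_of_card_le
    · intro x hx
      obtain ⟨a, ha, rfl⟩ := Finset.mem_image.1 hx
      exact Finset.mem_range.2 (hlt a ha)
    · rw [Finset.card_range, Finset.card_image_of_injOn (fun a ha b hb => hinj a ha b hb), hsc]
  obtain ⟨a, ha, hfa⟩ := Finset.mem_image.1 (himg ▸ Finset.mem_range.2 hj)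
  refine ⟨a, ⟨hS.mem_toFinset.1 ha, by rw [henc]; exact_mod_cast hfa⟩, ?_⟩
  rintro b ⟨hbS, hbr⟩
  have hbs : b ∈ s := hS.mem_toFinset.2 hbS
  apply hinj b hbs a ha
  rw [henc] at hbr
  have hfb : f b = j := by exact_mod_cast hbr
  rw [hfb, hfa]

/-! ### The lexicographic strict order on `Fin d → ℤ` -/

def llt (a b : Fin d → ℤ) : Prop := toLex a < toLex b

lemma llt_trans : Transitive (llt (d := d)) :=
  fun _ _ _ h1 h2 => lt_trans' (α := Lex (Fin d → ℤ)) h2 h1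

lemma llt_irrefl : ∀ a : Fin d → ℤ, ¬ llt a a := fun a h => lt_irrefl (toLex a) h

lemma llt_tri : ∀ a b : Fin d → ℤ, llt a b ∨ a = b ∨ llt b a := by
  intro a b
  rcases lt_trichotomy (toLex a) (toLex b) with h | h | h
  · exact Or.inl h
  · exact Or.inr (Or.inl h)
  · exact Or.inr (Or.inr h)

/-! ### The tiles -/

/-- The `j`-th tile of a multi-tile `Ω` of level `ℓ`. -/
noncomputable def tile (Ω : Set (Fin d → ℝ)) (ℓ j : ℕ) : Set (Fin d → ℝ) :=
  {x | x ∈ Ω ∧ KcntE Ω x = ℓ ∧ rkE Ω x = j}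

lemma measurableSet_tile {Ω : Set (Fin d → ℝ)} (hΩ : MeasurableSet Ω) (ℓ j : ℕ) :
    MeasurableSet (tile Ω ℓ j) := by
  have : tile Ω ℓ j = Ω ∩ (KcntE Ω ⁻¹' {(ℓ : ℝ≥0∞)}) ∩ (rkE Ω ⁻¹' {(j : ℝ≥0∞)}) := by
    ext x
    simp only [tile, Set.mem_setOf_eq, Set.mem_inter_iff, Set.mem_preimage,
      Set.mem_singleton_iff, and_assoc]
  rw [this]
  exact ((hΩ.inter ((measurable_KcntE hΩ) (measurableSet_singleton _))).inter
    ((measurable_rkE hΩ) (measurableSet_singleton _)))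

lemma mem_tile_iff {Ω : Set (Fin d → ℝ)} {ℓ j : ℕ} {x : Fin d → ℝ} :
    x ∈ tile Ω ℓ j ↔ x ∈ Ω ∧ (Kset Ω x).encard = ℓ ∧ (Rset Ω x).encard = j := by
  have h1 : KcntE Ω x = (ℓ : ℝ≥0∞) ↔ (Kset Ω x).encard = (ℓ : ℕ∞) := by
    rw [KcntE_eq]
    exact ⟨fun h => by exact_mod_cast h, fun h => by exact_mod_cast h⟩
  have h2 : rkE Ω x = (j : ℝ≥0∞) ↔ (Rset Ω x).encard = (j : ℕ∞) := by
    rw [rkE_eq]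
    exact ⟨fun h => by exact_mod_cast h, fun h => by exact_mod_cast h⟩
  simp only [tile, Set.mem_setOf_eq, h1, h2]

/-- For `ω` in the good set, the fiber of each tile is a singleton. -/
lemma Kset_tile_encard {Ω : Set (Fin d → ℝ)} {ℓ : ℕ} {ω : Fin d → ℝ}
    (hω : (Kset Ω ω).encard = ℓ) {j : ℕ} (hj : j < ℓ) :
    (Kset (tile Ω ℓ j) ω).encard = 1 := by
  set S := Kset Ω ω with hS
  have hSfin : S.Finite := Set.finite_of_encard_eq_coe hω
  have hmem : ∀ k : Fin d → ℤ,
      k ∈ Kset (tile Ω ℓ j) ω ↔ k ∈ S ∧ (S ∩ {m | llt m k}).encard = j := by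
    intro k
    have e1 : (Kset Ω (ω - cvec k)).encard = S.encard := Kset_shift_encard Ω ω k
    have e2 : (Rset Ω (ω - cvec k)).encard = (S ∩ {n | toLex n < toLex k}).encard := by
      rw [Rset_shift, encard_preimage_addLeft]
    constructor
    · intro hk
      have := mem_tile_iff.1 hk
      refine ⟨this.1, ?_⟩
      rw [← this.2.2, e2]
      rfl
    · rintro ⟨hkS, hkr⟩
      refine mem_tile_iff.2 ⟨hkS, ?_, ?_⟩
      · rw [e1, hω]
      · rw [e2, ← hkr]
        rfl
  obtain ⟨a, ⟨haS, har⟩, hau⟩ :=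
    exists_unique_rank llt llt_trans llt_irrefl llt_tri hSfin hω hj
  have : Kset (tile Ω ℓ j) ω = {a} := by
    ext k
    rw [hmem k, Set.mem_singleton_iff]
    constructor
    · intro hk; exact hau k hk
    · rintro rfl; exact ⟨haS, har⟩
  rw [this, Set.encard_singleton]

end Stmt1Aux

open Stmt1Aux
open scoped ENNReal

/-- a measurable set `Ω ⊆ ℝ^d` multi-tiles at level `ℓ` iff, up to a null
set, `Ω` is a disjoint union of `ℓ` measurable sets each of which tiles at level `1`. -/
theorem stmt1 (d ℓ : ℕ) (hℓ : 0 < ℓ) (Ω : Set (Fin d → ℝ)) (hΩ : MeasurableSet Ω) :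
    MultiTiles d Ω ℓ ↔
      ∃ Ωs : Fin ℓ → Set (Fin d → ℝ),
        (∀ j, MeasurableSet (Ωs j)) ∧
        Pairwise (Function.onFun Disjoint Ωs) ∧
        (∀ j, MultiTiles d (Ωs j) 1) ∧
        volume (symmDiff Ω (⋃ j, Ωs j)) = 0 := by
  constructor
  · -- forward direction
    intro hMT
    have hA : ∀ᵐ ω ∂(volume : Measure (Fin d → ℝ)), (Kset Ω ω).encard = ℓ :=
      (multiTiles_iff_encard hℓ).1 hMT
    refine ⟨fun j => tile Ω ℓ j.1, fun j => measurableSet_tile hΩ ℓ j.1, ?_, ?_, ?_⟩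
    · -- pairwise disjoint
      intro j j' hne
      refine Set.disjoint_left.2 fun x hx hx' => ?_
      have h1 := hx.2.2
      have h2 := hx'.2.2
      apply hne
      have h3 : ((j.1 : ℕ) : ℝ≥0∞) = ((j'.1 : ℕ) : ℝ≥0∞) := h1.symm.trans h2
      exact Fin.ext (by exact_mod_cast h3)
    · -- each tile multi-tiles at level 1
      intro j
      rw [multiTiles_iff_encard one_pos]
      filter_upwards [hA] with ω hω
      rw [Kset_tile_encard hω j.2]
      simp
    · -- symmetric difference is null
      have hU : (⋃ j : Fin ℓ, tile Ω ℓ j.1) = Ω ∩ {x | (Kset Ω x).encard = ℓ} := by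
        ext x
        simp only [Set.mem_iUnion, Set.mem_inter_iff, Set.mem_setOf_eq]
        constructor
        · rintro ⟨j, hj⟩
          have := mem_tile_iff.1 hj
          exact ⟨this.1, this.2.1⟩
        · rintro ⟨hxΩ, hxc⟩
          have hfin : (Kset Ω x).Finite := Set.finite_of_encard_eq_coe hxc
          have h0 : (0 : Fin d → ℤ) ∈ Kset Ω x := by
            simp only [Kset, Set.mem_setOf_eq, cvec_zero, sub_zero]
            exact hxΩ
          have hlt := rank_lt_card llt llt_irrefl hfin hxc h0
          have hRK : Rset Ω x = Kset Ω x ∩ {m | llt m 0} := by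
            ext m; exact and_comm
          have hRfin : (Rset Ω x).Finite := by
            rw [hRK]; exact hfin.subset Set.inter_subset_left
          obtain ⟨jn, hjn⟩ := hRfin.exists_encard_eq_coe
          have hjlt : jn < ℓ := by
            rw [hRK] at hjn
            rw [hjn] at hlt
            exact_mod_cast hlt
          exact ⟨⟨jn, hjlt⟩, mem_tile_iff.2 ⟨hxΩ, hxc, hjn⟩⟩
      rw [hU]
      have hsub : symmDiff Ω (Ω ∩ {x | (Kset Ω x).encard = ℓ})
          ⊆ {x | (Kset Ω x).encard = ℓ}ᶜ := by
        intro x hx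
        rcases hx with hx | hx
        · exact fun hc => hx.2 ⟨hx.1, hc⟩
        · exact absurd hx.1.1 hx.2
      refine measure_mono_null hsub ?_
      have := ae_iff.1 hA
      simpa [Set.compl_setOf] using this
  · -- reverse direction
    rintro ⟨Ωs, hmeas, hdisj, htile, hnull⟩
    set U := ⋃ j, Ωs j with hUdef
    set N := symmDiff Ω U with hNdef
    -- the union of all integer translates of N is null
    have hB : ∀ᵐ ω ∂(volume : Measure (Fin d → ℝ)), ∀ k : Fin d → ℤ, ω - cvec k ∉ N := by
      rw [ae_all_iff]
      intro k
      have : {ω : Fin d → ℝ | ¬ ω - cvec k ∉ N} ⊆ (fun ω => ω + (-cvec k)) ⁻¹' N := by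
        intro ω hω
        simp only [Set.mem_setOf_eq, not_not] at hω
        simpa [sub_eq_add_neg] using hω
      rw [ae_iff]
      refine measure_mono_null this ?_
      rw [measure_preimage_add_right]
      exact hnull
    have hT : ∀ᵐ ω ∂(volume : Measure (Fin d → ℝ)), ∀ j : Fin ℓ,
        (∑' k : Fin d → ℤ, (Ωs j).indicator (fun _ => (1 : ℝ)) (ω - fun i => (k i : ℝ))) = 1 := by
      rw [ae_all_iff]
      intro j
      have := htile j
      unfold MultiTiles at this
      simpa using this
    unfold MultiTiles
    filter_upwards [hB, hT] with ω hωB hωT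
    have hptwise : ∀ k : Fin d → ℤ, Ω.indicator (fun _ => (1 : ℝ)) (ω - cvec k)
        = ∑ j : Fin ℓ, (Ωs j).indicator (fun _ => (1 : ℝ)) (ω - cvec k) := by
      intro k
      set y := ω - cvec k with hy
      have hyN : y ∉ N := hωB k
      by_cases hyΩ : y ∈ Ω
      · have hyU : y ∈ U := by
          by_contra hyU
          exact hyN (Or.inl ⟨hyΩ, hyU⟩)
        obtain ⟨j₀, hj₀⟩ := Set.mem_iUnion.1 hyU
        rw [Set.indicator_of_mem hyΩ]
        rw [Finset.sum_eq_single j₀]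
        · rw [Set.indicator_of_mem hj₀]
        · intro j _ hjne
          refine Set.indicator_of_notMem (fun hyj => ?_) _
          exact Set.disjoint_left.1 (hdisj hjne) hyj hj₀
        · intro h; exact absurd (Finset.mem_univ j₀) h
      · have hyU : y ∉ U := by
          intro hyU
          exact hyN (Or.inr ⟨hyU, hyΩ⟩)
        rw [Set.indicator_of_notMem hyΩ]
        rw [Finset.sum_eq_zero]
        intro j _
        exact Set.indicator_of_notMem (fun hyj => hyU (Set.mem_iUnion.2 ⟨j, hyj⟩)) _
    have hsummable : ∀ j : Fin ℓ,
        Summable (fun k : Fin d → ℤ => (Ωs j).indicator (fun _ => (1 : ℝ)) (ω - cvec k)) := by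
      intro j
      by_contra hns
      have := tsum_eq_zero_of_not_summable hns
      rw [show (fun k : Fin d → ℤ => (Ωs j).indicator (fun _ => (1:ℝ)) (ω - cvec k))
        = (fun k : Fin d → ℤ => (Ωs j).indicator (fun _ => (1:ℝ)) (ω - fun i => (k i : ℝ)))
        from rfl] at this
      rw [hωT j] at this
      exact one_ne_zero this
    calc (∑' k : Fin d → ℤ, Ω.indicator (fun _ => (1 : ℝ)) (ω - fun i => (k i : ℝ)))
        = ∑' k : Fin d → ℤ, ∑ j : Fin ℓ,
            (Ωs j).indicator (fun _ => (1 : ℝ)) (ω - cvec k) := tsum_congr fun k => hptwise k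
      _ = ∑ j : Fin ℓ, ∑' k : Fin d → ℤ,
            (Ωs j).indicator (fun _ => (1 : ℝ)) (ω - cvec k) :=
          Summable.tsum_finsetSum (fun j _ => hsummable j)
      _ = ∑ j : Fin ℓ, (1 : ℝ) := Finset.sum_congr rfl (fun j _ => hωT j)
      _ = ℓ := by simp
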